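/- arXiv:0911.5655 — 8 statements merged into one kernel-verified Lean document; each statement's English description precedes it below -/
import Mathlib

section
/- Let W be a real vector space with a linear map J : W → W satisfying J² = −Id, and let μ : W × W → W be a skew-symmetric bilinear bracket. If μ satisfies the integrability condition μ(JX,JY) = μ(X,Y) + J μ(JX,Y) + J μ(X,JY) for all X,Y, then μ decomposes uniquely as μ = μ₁ + μ₂ where μ₁(JX,JY) = μ₁(X,Y) for all X,Y (abelian part) and μ₂(JX,Y) = J μ₂(X,Y) for all X,Y (bi-invariant part). -/
/-- decomposition of an integrable skew bracket into an abelian part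
and a bi-invariant part, on a real vector space with a complex structure `J`. -/
theorem integrable_decomposition
    (W : Type*) [AddCommGroup W] [Module ℝ W] [FiniteDimensional ℝ W]
    (J : W →ₗ[ℝ] W) (hJ : ∀ x, J (J x) = -x)
    (μ : W →ₗ[ℝ] W →ₗ[ℝ] W) (hskew : ∀ x y, μ x y = -μ y x)
    (hint : ∀ x y, μ (J x) (J y) = μ x y + J (μ (J x) y) + J (μ x (J y))) :
    ∃! p : (W →ₗ[ℝ] W →ₗ[ℝ] W) × (W →ₗ[ℝ] W →ₗ[ℝ] W),
      μ = p.1 + p.2 ∧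
      (∀ x y, p.1 x y = -p.1 y x) ∧ (∀ x y, p.2 x y = -p.2 y x) ∧
      (∀ x y, p.1 (J x) (J y) = p.1 x y) ∧
      (∀ x y, p.2 (J x) y = J (p.2 x y)) := by
  set A : W →ₗ[ℝ] W →ₗ[ℝ] W := (μ ∘ₗ J).compl₂ J with hAdef
  have hA : ∀ x y, A x y = μ (J x) (J y) := fun x y => rfl
  -- key consequence of integrability applied with J
  have hkey : ∀ x y, J (μ (J x) (J y)) = J (μ x y) - μ (J x) y - μ x (J y) := by
    intro x y
    have := congrArg J (hint x y)
    simp only [map_add, hJ] at this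
    rw [this]; abel
  refine ⟨((2⁻¹:ℝ) • (μ + A), (2⁻¹:ℝ) • (μ - A)), ⟨?_, ?_, ?_, ?_, ?_⟩, ?_⟩
  · ext x y
    simp only [LinearMap.add_apply, LinearMap.smul_apply, LinearMap.sub_apply]
    module
  · intro x y
    simp only [LinearMap.smul_apply, LinearMap.add_apply, hA, hskew x y,
      hskew (J x) (J y)]
    module
  · intro x y
    simp only [LinearMap.smul_apply, LinearMap.sub_apply, hA, hskew x y,
      hskew (J x) (J y)]
    module
  · intro x y
    simp only [LinearMap.smul_apply, LinearMap.add_apply, hA, hJ, map_neg,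
      LinearMap.neg_apply]
    module
  · intro x y
    simp only [LinearMap.smul_apply, LinearMap.sub_apply, hA, hJ, map_smul,
      map_sub, map_neg, LinearMap.neg_apply, hkey x y]
    module
  · rintro ⟨p1, p2⟩ ⟨hsum, hs1, hs2, hab, hbi⟩
    dsimp only at hsum hs1 hs2 hab hbi
    have hp2JJ : ∀ x y, p2 (J x) (J y) = - p2 x y := by
      intro x y
      rw [hbi, hs2 x (J y), map_neg, ← hbi, hJ]
      simp [hs2 y x]
    have h1 : ∀ x y, μ (J x) (J y) = p1 x y - p2 x y := by
      intro x y
      rw [hsum]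
      simp only [LinearMap.add_apply, hab, hp2JJ, sub_eq_add_neg]
    have hμ : ∀ x y, μ x y = p1 x y + p2 x y := by
      intro x y; rw [hsum]; rfl
    have e1 : p1 = (2⁻¹:ℝ) • (μ + A) := by
      ext x y
      simp only [LinearMap.smul_apply, LinearMap.add_apply, hA, h1, hμ]
      module
    have e2 : p2 = (2⁻¹:ℝ) • (μ - A) := by
      ext x y
      simp only [LinearMap.smul_apply, LinearMap.sub_apply, hA, h1, hμ]
      module
    exact Prod.ext e1 e2
end

section
/- Let W be a real vector space with J : W → W satisfying J² = −Id. Then every skew-symmetric bilinear bracket μ on W decomposes uniquely as a sum μ = μ_ab + μ_ℂ + μ_c where μ_ab(JX,JY) = μ_ab(X,Y), μ_ℂ(JX,Y) = J μ_ℂ(X,Y), and μ_c(JX,Y) = −J μ_c(X,Y) for all X,Y ∈ W. That is, V = V(ab) ⊕ V(ℂ) ⊕ V(anti-ℂ) as a direct sum of subspaces of Λ²(W*) ⊗ W. -/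
/-- every skew-symmetric bracket on `(W,J)` decomposes uniquely as
a sum of an abelian, a bi-invariant and an anti-bi-invariant bracket:
`V = V(ab) ⊕ V(ℂ) ⊕ V(anti-ℂ)`. -/
theorem full_decomposition
    (W : Type*) [AddCommGroup W] [Module ℝ W] [FiniteDimensional ℝ W]
    (J : W →ₗ[ℝ] W) (hJ : ∀ x, J (J x) = -x)
    (μ : W →ₗ[ℝ] W →ₗ[ℝ] W) (hskew : ∀ x y, μ x y = -μ y x) :
    ∃! p : (W →ₗ[ℝ] W →ₗ[ℝ] W) × (W →ₗ[ℝ] W →ₗ[ℝ] W) × (W →ₗ[ℝ] W →ₗ[ℝ] W),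
      μ = p.1 + p.2.1 + p.2.2 ∧
      (∀ x y, p.1 x y = -p.1 y x) ∧ (∀ x y, p.2.1 x y = -p.2.1 y x) ∧
      (∀ x y, p.2.2 x y = -p.2.2 y x) ∧
      (∀ x y, p.1 (J x) (J y) = p.1 x y) ∧
      (∀ x y, p.2.1 (J x) y = J (p.2.1 x y)) ∧
      (∀ x y, p.2.2 (J x) y = -J (p.2.2 x y)) := by
  classical
  set Aμ : W →ₗ[ℝ] W →ₗ[ℝ] W := LinearMap.mk₂ ℝ (fun x y => μ (J x) (J y))
    (fun x x' y => by simp) (fun c x y => by simp)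
    (fun x y y' => by simp) (fun c x y => by simp) with hAdef
  set p1 : W →ₗ[ℝ] W →ₗ[ℝ] W := (1/2 : ℝ) • (μ + Aμ) with hp1def
  set ν : W →ₗ[ℝ] W →ₗ[ℝ] W := (1/2 : ℝ) • (μ - Aμ) with hνdef
  have hν : ∀ x y, ν x y = (1/2 : ℝ) • (μ x y - μ (J x) (J y)) := by
    intro x y; simp [hνdef, hAdef]
  set Bν : W →ₗ[ℝ] W →ₗ[ℝ] W := LinearMap.mk₂ ℝ (fun x y => -J (ν (J x) y))
    (fun x x' y => by simp only [map_add, LinearMap.add_apply]; module)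
    (fun c x y => by simp)
    (fun x y y' => by simp only [map_add]; module)
    (fun c x y => by simp) with hBdef
  set p21 : W →ₗ[ℝ] W →ₗ[ℝ] W := (1/2 : ℝ) • (ν + Bν) with hp21def
  set p22 : W →ₗ[ℝ] W →ₗ[ℝ] W := (1/2 : ℝ) • (ν - Bν) with hp22def
  have hp1 : ∀ x y, p1 x y = (1/2 : ℝ) • (μ x y + μ (J x) (J y)) := by
    intro x y; simp [hp1def, hAdef]
  have hνA : ∀ x y, ν (J x) (J y) = -ν x y := by
    intro x y
    rw [hν, hν, hJ, hJ]
    simp only [map_neg, LinearMap.neg_apply, neg_neg]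
    module
  have hνskew : ∀ x y, ν x y = -ν y x := by
    intro x y
    rw [hν, hν, hskew x y, hskew (J x) (J y)]; module
  have hνswap : ∀ x y, ν (J x) y = ν x (J y) := by
    intro x y
    have h := hνA x (-(J y))
    simp only [map_neg, LinearMap.neg_apply, hJ, neg_neg] at h ⊢
    simpa using h
  have hp21 : ∀ x y, p21 x y = (1/2 : ℝ) • (ν x y - J (ν (J x) y)) := by
    intro x y
    simp only [hp21def, LinearMap.smul_apply, LinearMap.add_apply, hBdef,
      LinearMap.mk₂_apply, ← sub_eq_add_neg]
  have hp22 : ∀ x y, p22 x y = (1/2 : ℝ) • (ν x y + J (ν (J x) y)) := by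
    intro x y
    simp only [hp22def, LinearMap.smul_apply, LinearMap.sub_apply, hBdef,
      LinearMap.mk₂_apply, sub_neg_eq_add]
  refine ⟨(p1, p21, p22), ⟨?_, ?_, ?_, ?_, ?_, ?_, ?_⟩, ?_⟩
  · ext x y
    simp only [LinearMap.add_apply, hp1, hp21, hp22, hν]
    module
  · intro x y
    rw [hp1, hp1, hskew x y, hskew (J x) (J y)]; module
  · intro x y
    rw [hp21, hp21, hνskew x y, hνswap x y, hνskew x (J y)]
    simp only [map_neg]; module
  · intro x y
    rw [hp22, hp22, hνskew x y, hνswap x y, hνskew x (J y)]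
    simp only [map_neg]; module
  · intro x y
    rw [hp1, hp1, hJ, hJ]
    simp only [map_neg, LinearMap.neg_apply, neg_neg]
    module
  · intro x y
    rw [hp21, hp21]
    have h1 : ν (J (J x)) y = -ν x y := by
      rw [hJ]; simp
    rw [h1]
    simp only [map_smul, map_sub, map_neg, hJ, neg_neg]
    module
  · intro x y
    rw [hp22, hp22]
    have h1 : ν (J (J x)) y = -ν x y := by
      rw [hJ]; simp
    rw [h1]
    simp only [map_smul, map_add, map_neg, hJ, neg_neg]
    module
  · rintro ⟨q1, q2, q3⟩ ⟨hsum, hs1, hs2, hs3, hab, hC, hanti⟩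
    have hq2A : ∀ x y, q2 (J x) (J y) = -q2 x y := by
      intro x y
      have h1 : q2 x (J y) = J (q2 x y) := by
        rw [hs2 x (J y), hC, hs2 y x]; simp
      rw [hC, h1, hJ]
    have hq3A : ∀ x y, q3 (J x) (J y) = -q3 x y := by
      intro x y
      have h1 : q3 x (J y) = -J (q3 x y) := by
        rw [hs3 x (J y), hanti, hs3 y x]; simp
      rw [hanti, h1]; simp [hJ]
    have hsum' : ∀ x y, μ x y = q1 x y + q2 x y + q3 x y := by
      intro x y; rw [hsum]; simp
    have hqν : ∀ x y, ν x y = q2 x y + q3 x y := by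
      intro x y
      have h1 := hsum' x y
      have h2 := hsum' (J x) (J y)
      rw [hab, hq2A, hq3A] at h2
      rw [hν, h1, h2]; module
    have hq1 : q1 = p1 := by
      ext x y
      have h1 := hsum' x y
      have h2 := hsum' (J x) (J y)
      rw [hab, hq2A, hq3A] at h2
      rw [hp1, h1, h2]; module
    have hq2 : q2 = p21 := by
      ext x y
      rw [hp21, hqν, hqν (J x) y, hC, hanti]
      simp only [map_add, map_neg, hJ, neg_neg]
      module
    have hq3 : q3 = p22 := by
      ext x y
      rw [hp22, hqν, hqν (J x) y, hC, hanti]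
      simp only [map_add, map_neg, hJ, neg_neg]
      module
    simp [Prod.ext_iff, hq1, hq2, hq3]
end

section
/- Let 𝔤 be a real Lie algebra equipped with a linear map J with J² = −Id satisfying the anti-bi-invariance condition [JX,Y] = −J[X,Y] for all X,Y ∈ 𝔤. Then 𝔤 is 2-step nilpotent, i.e. [[𝔤,𝔤],𝔤] = 0. -/
/-- a real Lie algebra with an anti-bi-invariant almost complex
structure is 2-step nilpotent. -/
theorem antiBiInvariant_twoStep
    (L : Type*) [LieRing L] [LieAlgebra ℝ L] [FiniteDimensional ℝ L]
    (J : L →ₗ[ℝ] L) (hJ : ∀ x, J (J x) = -x)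
    (hanti : ∀ x y : L, ⁅J x, y⁆ = -J ⁅x, y⁆) :
    ∀ x y z : L, ⁅x, ⁅y, z⁆⁆ = 0 := by
  -- anti-invariance in the second slot
  have h2 : ∀ x y : L, ⁅x, J y⁆ = -J ⁅x, y⁆ := by
    intro x y
    rw [← lie_skew, hanti, ← lie_skew x y, map_neg, neg_neg]
  intro x y z
  -- Jacobi on Jx, y, z gives J v = - J v
  have key : -J ⁅x, ⁅y, z⁆⁆ = J ⁅x, ⁅y, z⁆⁆ := by
    calc -J ⁅x, ⁅y, z⁆⁆ = ⁅J x, ⁅y, z⁆⁆ := (hanti x ⁅y, z⁆).symm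
    _ = ⁅⁅J x, y⁆, z⁆ + ⁅y, ⁅J x, z⁆⁆ := leibniz_lie _ _ _
    _ = ⁅-J ⁅x, y⁆, z⁆ + ⁅y, -J ⁅x, z⁆⁆ := by rw [hanti, hanti]
    _ = -⁅J ⁅x, y⁆, z⁆ + -⁅y, J ⁅x, z⁆⁆ := by rw [neg_lie, lie_neg]
    _ = J ⁅⁅x, y⁆, z⁆ + J ⁅y, ⁅x, z⁆⁆ := by rw [hanti, h2]; simp
    _ = J (⁅⁅x, y⁆, z⁆ + ⁅y, ⁅x, z⁆⁆) := (map_add J _ _).symm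
    _ = J ⁅x, ⁅y, z⁆⁆ := by rw [← leibniz_lie]
  have hJ0 : J ⁅x, ⁅y, z⁆⁆ = 0 := by
    have h2s : (2 : ℝ) • J ⁅x, ⁅y, z⁆⁆ = 0 := by
      rw [two_smul]
      nth_rewrite 1 [← key]
      simp
    have := smul_eq_zero.mp h2s
    rcases this with h | h
    · norm_num at h
    · exact h
  have := hJ ⁅x, ⁅y, z⁆⁆
  rw [hJ0, map_zero] at this
  exact neg_eq_zero.mp this.symm
end

section
/- Let (𝔥, [·,·]_𝔥) be a real algebra given by a skew-symmetric bilinear map, and define on 𝔥 ⊗ ℂ the bracket [X⊗a, Y⊗b] := (conj(a)·conj(b)) [X,Y]_𝔥 (the anticomplexification). Then this bracket satisfies the Jacobi identity if and only if 𝔥 is a 2-step nilpotent Lie algebra. -/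
/-- The anticomplexification bracket on `𝔥 ⊗ ℂ`, where the complexification is
modelled as pairs `(x₁, x₂) ↔ x₁ + i x₂`:
`[X⊗a, Y⊗b] = conj(ab) [X,Y]`. -/
def antiBracket {H : Type*} [LieRing H] [LieAlgebra ℝ H] (u v : H × H) : H × H :=
  (⁅u.1, v.1⁆ - ⁅u.2, v.2⁆, -⁅u.1, v.2⁆ - ⁅u.2, v.1⁆)

/-- the anticomplexification bracket of a real Lie algebra `𝔥`
satisfies the Jacobi identity if and only if `𝔥` is 2-step nilpotent. -/
theorem antiComplexification_jacobi_iff_twoStep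
    (H : Type*) [LieRing H] [LieAlgebra ℝ H] [FiniteDimensional ℝ H] :
    (∀ u v w : H × H,
        antiBracket (antiBracket u v) w + antiBracket (antiBracket v w) u +
          antiBracket (antiBracket w u) v = 0) ↔
      (∀ x y z : H, ⁅⁅x, y⁆, z⁆ = 0) := by
  constructor
  · intro h x y z
    have j := h (x, 0) (y, 0) (0, z)
    have j2 := congrArg Prod.snd j
    simp [antiBracket, Prod.ext_iff] at j2
    rw [← lie_skew z x, ← lie_skew y x, ← lie_skew z y, lie_neg, lie_neg, lie_neg] at j2
    have h2 : ⁅z, ⁅x, y⁆⁆ + ⁅z, ⁅x, y⁆⁆ = 0 := by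
      have := j2
      abel_nf at this ⊢
      exact this
    have h3 : (2 : ℝ) • ⁅z, ⁅x, y⁆⁆ = 0 := by rw [two_smul]; exact h2
    have h4 : ⁅z, ⁅x, y⁆⁆ = 0 := by
      rcases smul_eq_zero.mp h3 with h | h
      · norm_num at h
      · exact h
    rw [← lie_skew, h4, neg_zero]
  · intro h u v w
    simp only [antiBracket, Prod.mk_add_mk, Prod.ext_iff, Prod.mk_eq_zero]
    constructor <;>
    · simp [sub_lie, neg_lie, h]
end

section
/- Let 𝔤 be a real Lie algebra with an anti-bi-invariant almost complex structure J (J² = −Id and [JX,Y] = −J[X,Y]). In the complexification, with 𝔤^{1,0} and 𝔤^{0,1} the ±i eigenspaces of J, the following hold: [𝔤^{1,0}, 𝔤^{1,0}] ⊆ 𝔤^{0,1}, [𝔤^{0,1}, 𝔤^{0,1}] ⊆ 𝔤^{1,0}, and [𝔤^{1,0}, 𝔤^{0,1}] = 0. -/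
/-- The ℂ-bilinear extension of the Lie bracket to the complexification
`𝔤 ⊗ ℂ`, modelled as pairs `(x₁, x₂) ↔ x₁ + i x₂`. -/
def cBracket {L : Type*} [LieRing L] [LieAlgebra ℝ L] (u v : L × L) : L × L :=
  (⁅u.1, v.1⁆ - ⁅u.2, v.2⁆, ⁅u.1, v.2⁆ + ⁅u.2, v.1⁆)

/-- for an anti-bi-invariant almost complex structure `J` on a real
Lie algebra `𝔤`, with `𝔤^{1,0} = {X - iJX}` and `𝔤^{0,1} = {X + iJX}`, one has
`[𝔤^{1,0},𝔤^{1,0}] ⊆ 𝔤^{0,1}`, `[𝔤^{0,1},𝔤^{0,1}] ⊆ 𝔤^{1,0}` and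
`[𝔤^{1,0},𝔤^{0,1}] = 0`. -/
theorem antiBiInvariant_bracket_relations
    (L : Type*) [LieRing L] [LieAlgebra ℝ L] [FiniteDimensional ℝ L]
    (J : L →ₗ[ℝ] L) (hJ : ∀ x, J (J x) = -x)
    (hanti : ∀ x y : L, ⁅J x, y⁆ = -J ⁅x, y⁆) :
    (∀ x y : L, (cBracket (x, -J x) (y, -J y)).2 =
        J ((cBracket (x, -J x) (y, -J y)).1)) ∧
    (∀ x y : L, (cBracket (x, J x) (y, J y)).2 =
        -J ((cBracket (x, J x) (y, J y)).1)) ∧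
    (∀ x y : L, cBracket (x, -J x) (y, J y) = 0) := by
  have hright : ∀ x y : L, ⁅x, J y⁆ = -J ⁅x, y⁆ := by
    intro x y
    rw [← lie_skew, hanti, ← lie_skew x y, map_neg]
  have hJJ : ∀ x y : L, ⁅J x, J y⁆ = -⁅x, y⁆ := by
    intro x y
    rw [hanti, hright, map_neg, hJ, neg_neg]
  refine ⟨fun x y => ?_, fun x y => ?_, fun x y => ?_⟩ <;>
    simp [cBracket, neg_lie, lie_neg, hJJ, hanti, hright, hJ, Prod.ext_iff, two_smul] <;>
    · rw [show (⁅y, x⁆ : L) = -⁅x, y⁆ from (lie_skew y x).symm, map_neg]; abel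
end

section
/- Conversely, let 𝔤 = 𝔳 ⊕ 𝔷 be a real Lie algebra with [𝔤,𝔤] ⊆ 𝔷, [𝔤,𝔷] = 0, and let J be a linear map with J² = −Id preserving both 𝔳 and 𝔷 such that J⁻ (equal to J on 𝔷 and −J on 𝔳) is anti-bi-invariant. Then J is bi-invariant: [JX,Y] = J[X,Y] for all X,Y ∈ 𝔤. -/
/-- conversely, if `J⁻` (equal to `J` on `𝔷` and `-J` on `𝔳`) is
anti-bi-invariant on `𝔤 = 𝔳 ⊕ 𝔷` with `[𝔤,𝔤] ⊆ 𝔷` central, then `J` is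
bi-invariant. -/
theorem biInvariant_of_Jminus_antiBiInvariant
    (L : Type*) [LieRing L] [LieAlgebra ℝ L] [FiniteDimensional ℝ L]
    (J : L →ₗ[ℝ] L) (hJ : ∀ x, J (J x) = -x)
    (v z : Submodule ℝ L) (hcompl : IsCompl v z)
    (hJv : ∀ x ∈ v, J x ∈ v) (hJz : ∀ x ∈ z, J x ∈ z)
    (hder : ∀ x y : L, ⁅x, y⁆ ∈ z)
    (hcentral : ∀ x : L, ∀ w ∈ z, ⁅x, w⁆ = (0 : L))
    (Jm : L →ₗ[ℝ] L)
    (hJmz : ∀ w ∈ z, Jm w = J w) (hJmv : ∀ w ∈ v, Jm w = -J w)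
    (hanti : ∀ x y : L, ⁅Jm x, y⁆ = -Jm ⁅x, y⁆) :
    ∀ x y : L, ⁅J x, y⁆ = J ⁅x, y⁆ := by
  intro x y
  obtain ⟨xv, xz, hxv, hxz, hx⟩ := Submodule.codisjoint_iff_exists_add_eq.mp hcompl.codisjoint x
  have hzero : ∀ w ∈ z, ∀ u : L, ⁅w, u⁆ = 0 := by
    intro w hw u
    rw [← lie_skew, hcentral u w hw, neg_zero]
  have h1 : ⁅J x, y⁆ = ⁅J xv, y⁆ := by
    rw [← hx, map_add, add_lie, hzero (J xz) (hJz xz hxz) y, add_zero]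
  have h2 : ⁅Jm x, y⁆ = -⁅J xv, y⁆ := by
    rw [← hx, map_add, add_lie, hJmv xv hxv, hJmz xz hxz,
      hzero (J xz) (hJz xz hxz) y, add_zero, neg_lie]
  have h3 : Jm ⁅x, y⁆ = J ⁅x, y⁆ := hJmz _ (hder x y)
  have := hanti x y
  rw [h2, h3] at this
  rw [h1, ← neg_neg (J ⁅x, y⁆), ← this, neg_neg]
end

section
/- Let W be a real vector space with complex structure J, decomposed as W = W₁ ⊕ W₂ with both summands J-invariant. Fix a linear involution φ of W that anti-commutes with J on W₁ (φJ = −Jφ on W₁) and equals the identity on W₂. For a bracket μ ∈ V_{pq} (i.e. μ(W₁,W₁) ⊆ W₂ and μ(W,W₂)=0), define μ⁻(X,Y) := μ(φX, φY). Then μ⁻ is bi-invariant with respect to J (μ⁻(JX,Y) = Jμ⁻(X,Y)) if and only if μ is anti-bi-invariant (μ(JX,Y) = −Jμ(X,Y)). -/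
/-- the conjugation `μ⁻(X,Y) := μ(φX, φY)` interchanges
bi-invariant and anti-bi-invariant brackets in `V_{pq}`. -/
theorem conjugation_biInvariant_iff_antiBiInvariant
    (W : Type*) [AddCommGroup W] [Module ℝ W] [FiniteDimensional ℝ W]
    (J : W →ₗ[ℝ] W) (hJ : ∀ x, J (J x) = -x)
    (W₁ W₂ : Submodule ℝ W) (hcompl : IsCompl W₁ W₂)
    (hJ1 : ∀ x ∈ W₁, J x ∈ W₁) (hJ2 : ∀ x ∈ W₂, J x ∈ W₂)
    (φ : W →ₗ[ℝ] W) (hφ2 : ∀ x, φ (φ x) = x)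
    (hφW₂ : ∀ x ∈ W₂, φ x = x)
    (hφJ : ∀ x ∈ W₁, φ (J x) = -J (φ x))
    (hφ1 : ∀ x ∈ W₁, φ x ∈ W₁)
    (μ : W →ₗ[ℝ] W →ₗ[ℝ] W) (hskew : ∀ x y, μ x y = -μ y x)
    (hμ1 : ∀ x ∈ W₁, ∀ y ∈ W₁, μ x y ∈ W₂)
    (hμ2 : ∀ x : W, ∀ z ∈ W₂, μ x z = 0) :
    (∀ x y : W, μ (φ (J x)) (φ y) = J (μ (φ x) (φ y))) ↔
      (∀ x y : W, μ (J x) y = -J (μ x y)) := by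
  -- μ vanishes when the first argument is in W₂
  have hμ2' : ∀ z ∈ W₂, ∀ y : W, μ z y = 0 := fun z hz y => by
    rw [hskew, hμ2 y z hz, neg_zero]
  constructor
  · intro h x y
    obtain ⟨a, b, ha, hb, hab⟩ := Submodule.codisjoint_iff_exists_add_eq.mp hcompl.codisjoint x
    have key := h (φ x) (φ y)
    rw [hφ2, hφ2] at key
    have hx : φ x = φ a + b := by rw [← hab, map_add, hφW₂ b hb]
    have hJφx : φ (J (φ x)) = -J a + J b := by
      rw [hx, map_add, map_add, hφJ (φ a) (hφ1 a ha), hφW₂ (J b) (hJ2 b hb), hφ2]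
    rw [hJφx] at key
    simp only [map_add, map_neg, LinearMap.add_apply, LinearMap.neg_apply,
      hμ2' (J b) (hJ2 b hb)] at key
    have hJx : μ (J x) y = μ (J a) y := by
      rw [← hab, map_add, map_add, LinearMap.add_apply,
        hμ2' (J b) (hJ2 b hb) y, add_zero]
    rw [hJx]
    linear_combination (norm := module) -key
  · intro h x y
    obtain ⟨a, b, ha, hb, hab⟩ := Submodule.codisjoint_iff_exists_add_eq.mp hcompl.codisjoint x
    have hx : φ x = φ a + b := by rw [← hab, map_add, hφW₂ b hb]
    have hJx : φ (J x) = -J (φ a) + J b := by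
      rw [← hab, map_add, map_add, hφJ a ha, hφW₂ (J b) (hJ2 b hb)]
    rw [hJx, hx]
    simp only [map_add, map_neg, LinearMap.add_apply, LinearMap.neg_apply,
      hμ2' (J b) (hJ2 b hb), hμ2' b hb, add_zero]
    rw [h (φ a) (φ y), neg_neg]
end

section
/- Let 𝔫 be a real nilpotent Lie algebra with inner product ⟨·,·⟩ and bi-invariant complex structure J ([JX,Y] = J[X,Y]) such that J is orthogonal (⟨JX,JY⟩ = ⟨X,Y⟩). Then the Ricci operator Ric, defined by ⟨Ric X, Y⟩ = −½ Σ ⟨[X,Xᵢ],Xⱼ⟩⟨[Y,Xᵢ],Xⱼ⟩ + ¼ Σ ⟨[Xᵢ,Xⱼ],X⟩⟨[Xᵢ,Xⱼ],Y⟩ for an orthonormal basis {Xᵢ}, commutes with J: Ric ∘ J = J ∘ Ric. -/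
open scoped RealInnerProductSpace

section aux
variable {L : Type*} [NormedAddCommGroup L] [InnerProductSpace ℝ L] [FiniteDimensional ℝ L]

lemma skewJ (J : L →ₗ[ℝ] L) (hJ : ∀ x, J (J x) = -x)
    (hJorth : ∀ x y : L, ⟪J x, J y⟫ = ⟪x, y⟫) (x y : L) :
    ⟪J x, y⟫ = -⟪x, J y⟫ := by
  have h := hJorth x (J y)
  rw [hJ y, inner_neg_right] at h
  linarith

lemma innerS {ι : Type*} [Fintype ι] (b : OrthonormalBasis ι ℝ L) (a c : L) :
    ∑ j, ⟪a, b j⟫ * ⟪c, b j⟫ = ⟪a, c⟫ := by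
  have h := b.sum_inner_mul_inner a c
  rw [← h]
  exact Finset.sum_congr rfl fun j _ => by rw [real_inner_comm c]

lemma sumA {ι : Type*} [Fintype ι] (b : OrthonormalBasis ι ℝ L) (f : L →ₗ[ℝ] L) (x y : L) :
    ∑ i, ⟪f (b i), x⟫ * ⟪f (b i), y⟫ =
      ⟪LinearMap.adjoint f x, LinearMap.adjoint f y⟫ := by
  have h : ∀ (v w : L), ⟪f v, w⟫ = ⟪LinearMap.adjoint f w, v⟫ := fun v w => by
    rw [LinearMap.adjoint_inner_left]; exact real_inner_comm _ _
  calc ∑ i, ⟪f (b i), x⟫ * ⟪f (b i), y⟫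
      = ∑ i, ⟪LinearMap.adjoint f x, b i⟫ * ⟪LinearMap.adjoint f y, b i⟫ :=
        Finset.sum_congr rfl fun i _ => by rw [h, h]
    _ = ⟪LinearMap.adjoint f x, LinearMap.adjoint f y⟫ := innerS b _ _

end aux

lemma ricci_aux {L : Type*} [NormedAddCommGroup L] [InnerProductSpace ℝ L] [FiniteDimensional ℝ L]
    {ι : Type*} [Fintype ι] (b : OrthonormalBasis ι ℝ L) (br : L → L → L) (J R : L → L)
    (hJorth : ∀ x y : L, ⟪J x, J y⟫ = ⟪x, y⟫) (hJs : Function.Surjective J)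
    (hbi : ∀ x y : L, br (J x) y = J (br x y))
    (hRic : ∀ x y : L, ⟪R x, y⟫ =
        -(1/2) * ∑ i, ∑ j, ⟪br x (b i), b j⟫ * ⟪br y (b i), b j⟫
        + (1/4) * ∑ i, ∑ j, ⟪br (b i) (b j), x⟫ * ⟪br (b i) (b j), y⟫) (x : L) :
    R (J x) = J (R x) := by
  have Jadd : ∀ u v, J (u + v) = J u + J v := by
    intro u v; apply ext_inner_right ℝ; intro w
    obtain ⟨w, rfl⟩ := hJs w
    rw [inner_add_left, hJorth, hJorth, hJorth, inner_add_left]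
  have Jsmul : ∀ (t : ℝ) u, J (t • u) = t • J u := by
    intro t u; apply ext_inner_right ℝ; intro w
    obtain ⟨w, rfl⟩ := hJs w
    rw [real_inner_smul_left, hJorth, hJorth, real_inner_smul_left]
  let Jl : L →ₗ[ℝ] L := { toFun := J, map_add' := Jadd, map_smul' := Jsmul }
  let Ji : L →ₗᵢ[ℝ] L := Jl.isometryOfInner hJorth
  let Je : L ≃ₗᵢ[ℝ] L := LinearIsometryEquiv.ofSurjective Ji hJs
  have hJe : ∀ a, J (Je.symm a) = a := fun a => Je.apply_symm_apply a
  have hP : ∀ x y : L, (∑ i, ⟪br x (b i), br y (b i)⟫) =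
      -2 * ⟪R x, y⟫ +
        (1/2) * ∑ i, ∑ j, ⟪br (b i) (b j), x⟫ * ⟪br (b i) (b j), y⟫ := by
    intro x y
    have h := hRic x y
    have h2 : (∑ i, ∑ j, ⟪br x (b i), b j⟫ * ⟪br y (b i), b j⟫)
        = ∑ i, ⟪br x (b i), br y (b i)⟫ :=
      Finset.sum_congr rfl fun i _ => innerS b _ _
    rw [h2] at h
    linarith
  have hPsym : ∀ x z : L, (∑ i, ⟪br x (b i), br z (b i)⟫)
      = ∑ i, ⟪br z (b i), br x (b i)⟫ :=
    fun x z => Finset.sum_congr rfl fun i _ => real_inner_comm _ _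
  have hPadd : ∀ x y z : L, (∑ i, ⟪br (x + y) (b i), br z (b i)⟫)
      = (∑ i, ⟪br x (b i), br z (b i)⟫) + ∑ i, ⟪br y (b i), br z (b i)⟫ := by
    intro x y z
    have hT : (∑ i, ∑ j, ⟪br (b i) (b j), z⟫ * ⟪br (b i) (b j), x + y⟫)
        = (∑ i, ∑ j, ⟪br (b i) (b j), z⟫ * ⟪br (b i) (b j), x⟫)
          + ∑ i, ∑ j, ⟪br (b i) (b j), z⟫ * ⟪br (b i) (b j), y⟫ := by
      simp_rw [inner_add_right, mul_add, Finset.sum_add_distrib]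
    rw [hPsym (x + y) z, hPsym x z, hPsym y z, hP, hP, hP, hT, inner_add_right]
    ring
  have hPsmul : ∀ (t : ℝ) (x z : L), (∑ i, ⟪br (t • x) (b i), br z (b i)⟫)
      = t * ∑ i, ⟪br x (b i), br z (b i)⟫ := by
    intro t x z
    have hT : (∑ i, ∑ j, ⟪br (b i) (b j), z⟫ * ⟪br (b i) (b j), t • x⟫)
        = t * ∑ i, ∑ j, ⟪br (b i) (b j), z⟫ * ⟪br (b i) (b j), x⟫ := by
      simp_rw [real_inner_smul_right, Finset.mul_sum]
      exact Finset.sum_congr rfl fun i _ => Finset.sum_congr rfl fun j _ => by ring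
    rw [hPsym (t • x) z, hPsym x z, hP, hP, hT, real_inner_smul_right]
    ring
  have hadd : ∀ (x y : L) (i : ι), br (x + y) (b i) = br x (b i) + br y (b i) := by
    intro x y i
    have expand : ∀ k : ι,
        ⟪br (x + y) (b k) - br x (b k) - br y (b k), br (x + y) (b k) - br x (b k) - br y (b k)⟫
        = ⟪br (x + y) (b k), br (x + y) (b k)⟫ - ⟪br (x + y) (b k), br x (b k)⟫
          - ⟪br (x + y) (b k), br y (b k)⟫ - ⟪br x (b k), br (x + y) (b k)⟫
          + ⟪br x (b k), br x (b k)⟫ + ⟪br x (b k), br y (b k)⟫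
          - ⟪br y (b k), br (x + y) (b k)⟫ + ⟪br y (b k), br x (b k)⟫
          + ⟪br y (b k), br y (b k)⟫ := fun k => by
      simp only [inner_sub_left, inner_sub_right]
      ring
    have hzero : (∑ k, ⟪br (x + y) (b k) - br x (b k) - br y (b k),
        br (x + y) (b k) - br x (b k) - br y (b k)⟫) = 0 := by
      rw [Finset.sum_congr rfl fun k _ => expand k]
      simp only [Finset.sum_add_distrib, Finset.sum_sub_distrib]
      have h1 := hPadd x y (x + y)
      have h2 := hPadd x y x
      have h3 := hPadd x y y
      have h4 := hPsym (x + y) x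
      have h5 := hPsym (x + y) y
      have h6 := hPsym x y
      linarith
    have hnn : ∀ k ∈ Finset.univ (α := ι),
        (0:ℝ) ≤ ⟪br (x + y) (b k) - br x (b k) - br y (b k),
          br (x + y) (b k) - br x (b k) - br y (b k)⟫ := fun k _ => real_inner_self_nonneg
    have := (Finset.sum_eq_zero_iff_of_nonneg hnn).mp hzero i (Finset.mem_univ i)
    have h0 : br (x + y) (b i) - br x (b i) - br y (b i) = 0 :=
      inner_self_eq_zero (𝕜 := ℝ) |>.mp this
    rw [sub_sub, sub_eq_zero] at h0
    exact h0
  have hsmul : ∀ (t : ℝ) (x : L) (i : ι), br (t • x) (b i) = t • br x (b i) := by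
    intro t x i
    have expand : ∀ k : ι,
        ⟪br (t • x) (b k) - t • br x (b k), br (t • x) (b k) - t • br x (b k)⟫
        = ⟪br (t • x) (b k), br (t • x) (b k)⟫ - t * ⟪br (t • x) (b k), br x (b k)⟫
          - t * ⟪br x (b k), br (t • x) (b k)⟫ + t * (t * ⟪br x (b k), br x (b k)⟫) := fun k => by
      simp only [inner_sub_left, inner_sub_right, real_inner_smul_left, real_inner_smul_right]
      ring
    have hzero : (∑ k, ⟪br (t • x) (b k) - t • br x (b k),
        br (t • x) (b k) - t • br x (b k)⟫) = 0 := by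
      rw [Finset.sum_congr rfl fun k _ => expand k]
      simp only [Finset.sum_add_distrib, Finset.sum_sub_distrib, ← Finset.mul_sum]
      have h1 := hPsmul t x (t • x)
      have h2 := hPsmul t x x
      linear_combination h1 - t * h2
    have hnn : ∀ k ∈ Finset.univ (α := ι),
        (0:ℝ) ≤ ⟪br (t • x) (b k) - t • br x (b k), br (t • x) (b k) - t • br x (b k)⟫ :=
      fun k _ => real_inner_self_nonneg
    have := (Finset.sum_eq_zero_iff_of_nonneg hnn).mp hzero i (Finset.mem_univ i)
    have h0 : br (t • x) (b i) - t • br x (b i) = 0 := inner_self_eq_zero (𝕜 := ℝ) |>.mp this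
    exact sub_eq_zero.mp h0
  have key : ∀ u v : L,
      (∑ i, ∑ j, ⟪br (b i) (b j), J u⟫ * ⟪br (b i) (b j), J v⟫)
      = ∑ i, ∑ j, ⟪br (b i) (b j), u⟫ * ⟪br (b i) (b j), v⟫ := by
    intro u v
    rw [Finset.sum_comm]
    conv_rhs => rw [Finset.sum_comm]
    refine Finset.sum_congr rfl fun j _ => ?_
    let g : L →ₗ[ℝ] L :=
      { toFun := fun w => br w (b j)
        map_add' := fun a c => hadd a c j
        map_smul' := fun t a => by
          simp only [RingHom.id_apply]; exact hsmul t a j }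
    have step : ∀ i, ⟪br (b i) (b j), J u⟫ * ⟪br (b i) (b j), J v⟫
        = ⟪g ((b.map Je.symm) i), u⟫ * ⟪g ((b.map Je.symm) i), v⟫ := fun i => by
      rw [OrthonormalBasis.map_apply]
      show _ = ⟪br (Je.symm (b i)) (b j), u⟫ * ⟪br (Je.symm (b i)) (b j), v⟫
      conv_lhs => rw [← hJe (b i), hbi, hJorth, hJorth]
    have step2 : ∀ i, ⟪br (b i) (b j), u⟫ * ⟪br (b i) (b j), v⟫
        = ⟪g (b i), u⟫ * ⟪g (b i), v⟫ := fun i => rfl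
    rw [Finset.sum_congr rfl fun i _ => step i, Finset.sum_congr rfl fun i _ => step2 i,
      sumA (b.map Je.symm) g u v, sumA b g u v]
  apply ext_inner_right ℝ
  intro y
  obtain ⟨y, rfl⟩ := hJs y
  rw [hJorth, hRic, hRic]
  have hS : (∑ i, ∑ j, ⟪br (J x) (b i), b j⟫ * ⟪br (J y) (b i), b j⟫)
      = ∑ i, ∑ j, ⟪br x (b i), b j⟫ * ⟪br y (b i), b j⟫ :=
    Finset.sum_congr rfl fun i _ => by rw [innerS b, innerS b, hbi, hbi, hJorth]
  rw [hS, key]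

/-- for a nilpotent metric Lie algebra with an orthogonal
bi-invariant complex structure `J`, the Ricci operator commutes with `J`. -/
theorem ricci_commutes_with_biInvariant_J
    (L : Type*) [NormedAddCommGroup L] [InnerProductSpace ℝ L]
    [FiniteDimensional ℝ L] [LieRing L] [LieAlgebra ℝ L]
    [LieRing.IsNilpotent L]
    (ι : Type*) [Fintype ι] (b : OrthonormalBasis ι ℝ L)
    (J : L →ₗ[ℝ] L) (hJ : ∀ x, J (J x) = -x)
    (hJorth : ∀ x y : L, ⟪J x, J y⟫ = ⟪x, y⟫)
    (hbi : ∀ x y : L, ⁅J x, y⁆ = J ⁅x, y⁆)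
    (Ric : L →ₗ[ℝ] L)
    (hRic : ∀ x y : L, ⟪Ric x, y⟫ =
        -(1/2) * ∑ i, ∑ j, ⟪⁅x, b i⁆, b j⟫ * ⟪⁅y, b i⁆, b j⟫
        + (1/4) * ∑ i, ∑ j, ⟪⁅b i, b j⁆, x⟫ * ⟪⁅b i, b j⁆, y⟫) :
    ∀ x : L, Ric (J x) = J (Ric x) := by
  intro x
  exact ricci_aux b (fun u v => ⁅u, v⁆) J Ric hJorth (fun z => ⟨J (-z), by rw [hJ, neg_neg]⟩)
    hbi hRic x
end
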